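/- Let P : ℝ → ℝ be continuous, positive and antitone (nonincreasing) on (0,∞). Let M > 0 and let D be a Borel probability measure on ℝ supported in [-M, M] whose mean μ = ∫ η dD(η) is strictly negative. Let c > M, γ ∈ ℝ and p̂ ∈ ℝ. If −μ · P(c) > γ − μ · p̂, then the expected deviation gain −γ + ∫ ( η·p̂ + ∫_{c+η}^{c} P(a) da ) dD(η) is strictly positive. (This is the key step showing a noisy CFMM with negative-mean noise trades is not truthful: choosing a state c with P(c) large enough makes deviation profitable.) -/

import Mathlib

open MeasureTheory intervalIntegral

/-- Key step showing a noisy CFMM with negative-mean noise trades is not truthful: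
if the reserve level `c` is chosen so that `-μ · P(c) > γ - μ · p̂`, then the
expected deviation gain is strictly positive. -/
theorem negative_mean_noise_not_truthful
    (P : ℝ → ℝ)
    (hPcont : ContinuousOn P (Set.Ioi 0))
    (hPpos : ∀ x ∈ Set.Ioi (0 : ℝ), 0 < P x)
    (hPanti : AntitoneOn P (Set.Ioi 0))
    (M : ℝ) (hM : 0 < M)
    (D : Measure ℝ) [IsProbabilityMeasure D]
    (hsupp : ∀ᵐ η ∂D, η ∈ Set.Icc (-M) M)
    (μ : ℝ) (hμ : μ = ∫ η, η ∂D) (hμneg : μ < 0)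
    (c γ phat : ℝ) (hc : M < c)
    (hcond : γ - μ * phat < -μ * P c) :
    0 < -γ + ∫ η, (η * phat + ∫ a in (c + η)..c, P a) ∂D := by
  have hcM : (0 : ℝ) < c - M := by linarith
  -- clamp function
  set clamp : ℝ → ℝ := fun x => min (max x (c - M)) (c + M) with hclamp
  have hclamp_mem : ∀ x, clamp x ∈ Set.Icc (c - M) (c + M) := by
    intro x
    constructor
    · exact le_min (le_max_right _ _) (by linarith)
    · exact min_le_right _ _
  have hclamp_pos : ∀ x, clamp x ∈ Set.Ioi (0 : ℝ) := fun x =>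
    lt_of_lt_of_le hcM (hclamp_mem x).1
  have hclamp_cont : Continuous clamp :=
    (continuous_id.max continuous_const).min continuous_const
  set P' : ℝ → ℝ := fun x => P (clamp x) with hP'
  have hP'cont : Continuous P' :=
    hPcont.comp_continuous hclamp_cont hclamp_pos
  have hP'eq : ∀ x ∈ Set.Icc (c - M) (c + M), P' x = P x := by
    intro x hx
    have : clamp x = x := by
      simp only [hclamp]
      rw [max_eq_left hx.1, min_eq_left hx.2]
    simp [hP', this]
  have hP'pos : ∀ x, 0 < P' x := fun x => hPpos _ (hclamp_pos x)
  have hP'le : ∀ x, P' x ≤ P (c - M) := fun x =>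
    hPanti (Set.mem_Ioi.2 hcM) (hclamp_pos x) (hclamp_mem x).1
  -- the continuous substitute for the integrand
  set F : ℝ → ℝ := fun η => η * phat + ∫ a in (c + η)..c, P' a with hF
  have hP'ii : ∀ a b : ℝ, IntervalIntegrable P' volume a b := fun a b =>
    hP'cont.intervalIntegrable a b
  have hFcont : Continuous F := by
    have h1 : Continuous fun η : ℝ => ∫ a in c..(c + η), P' a :=
      (intervalIntegral.continuous_primitive hP'ii c).comp
        (continuous_const.add continuous_id)
    have h2 : Continuous fun η : ℝ => ∫ a in (c + η)..c, P' a := by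
      have : (fun η : ℝ => ∫ a in (c + η)..c, P' a)
          = fun η : ℝ => -(∫ a in c..(c + η), P' a) := by
        funext η; rw [intervalIntegral.integral_symm]
      rw [this]; exact h1.neg
    exact (continuous_id.mul continuous_const).add h2
  -- a.e. equality of the original integrand with F
  have haeeq : (fun η => η * phat + ∫ a in (c + η)..c, P a) =ᵐ[D] F := by
    filter_upwards [hsupp] with η hη
    have hmem : c + η ∈ Set.Icc (c - M) (c + M) := by
      constructor <;> [linarith [hη.1]; linarith [hη.2]]
    have hcmem : c ∈ Set.Icc (c - M) (c + M) := by
      constructor <;> linarith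
    have : ∫ a in (c + η)..c, P a = ∫ a in (c + η)..c, P' a := by
      apply intervalIntegral.integral_congr
      intro x hx
      exact (hP'eq x (Set.uIcc_subset_Icc hmem hcmem hx)).symm
    simp [hF, this]
  -- pointwise lower bound on the support
  have hlow : ∀ η ∈ Set.Icc (-M) M, η * (phat - P c) ≤ F η := by
    intro η hη
    have hcpos : c ∈ Set.Ioi (0 : ℝ) := by simp; linarith
    have hkey : -η * P c ≤ ∫ a in (c + η)..c, P' a := by
      rcases le_total η 0 with h | h
      · -- c + η ≤ c
        have hab : c + η ≤ c := by linarith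
        have : ∫ a in (c + η)..c, (P c) ≤ ∫ a in (c + η)..c, P' a := by
          apply intervalIntegral.integral_mono_on hab
            (intervalIntegrable_const) (hP'ii _ _)
          intro x hx
          have hx1 : x ∈ Set.Icc (c - M) (c + M) := by
            constructor <;> [linarith [hx.1, hη.1]; linarith [hx.2]]
          rw [hP'eq x hx1]
          exact hPanti (lt_of_lt_of_le hcM hx1.1) hcpos hx.2
        have hconst : ∫ a in (c + η)..c, (P c : ℝ) = -η * P c := by
          simp
        linarith [this, hconst.ge]
      · -- c ≤ c + η
        have hab : c ≤ c + η := by linarith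
        have h1 : ∫ a in c..(c + η), P' a ≤ ∫ a in c..(c + η), (P c) := by
          apply intervalIntegral.integral_mono_on hab (hP'ii _ _)
            (intervalIntegrable_const)
          intro x hx
          have hx1 : x ∈ Set.Icc (c - M) (c + M) := by
            constructor <;> [linarith [hx.1]; linarith [hx.2, hη.2]]
          rw [hP'eq x hx1]
          exact hPanti hcpos (lt_of_lt_of_le hcM hx1.1) hx.1
        rw [intervalIntegral.integral_symm]
        have h2 : ∫ a in c..(c + η), (P c : ℝ) = η * P c := by
          simp [mul_comm]
        nlinarith [h1, h2]
    simp only [hF]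
    nlinarith [hkey]
  -- integrability
  have hid_int : Integrable (fun η : ℝ => η) D := by
    apply Integrable.mono' (integrable_const M) aestronglyMeasurable_id
    filter_upwards [hsupp] with η hη
    rw [Real.norm_eq_abs, abs_le]; exact ⟨hη.1, hη.2⟩
  have hg_int : Integrable (fun η : ℝ => η * (phat - P c)) D :=
    hid_int.mul_const _
  have hF_int : Integrable F D := by
    apply Integrable.mono' (integrable_const (M * |phat| + M * P (c - M)))
      hFcont.aestronglyMeasurable
    filter_upwards [hsupp] with η hη
    have habs : |η| ≤ M := abs_le.2 ⟨hη.1, hη.2⟩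
    have hInt : ‖∫ a in (c + η)..c, P' a‖ ≤ P (c - M) * |c - (c + η)| := by
      apply intervalIntegral.norm_integral_le_of_norm_le_const
      intro x _
      rw [Real.norm_eq_abs, abs_of_pos (hP'pos x)]
      exact hP'le x
    have habs2 : |c - (c + η)| = |η| := by
      rw [show c - (c + η) = -η by ring, abs_neg]
    rw [habs2, mul_comm] at hInt
    calc ‖F η‖ ≤ ‖η * phat‖ + ‖∫ a in (c + η)..c, P' a‖ := norm_add_le _ _
      _ ≤ |η| * |phat| + |η| * P (c - M) := by
          rw [Real.norm_eq_abs, abs_mul]; exact add_le_add le_rfl hInt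
      _ ≤ M * |phat| + M * P (c - M) := by
          have hPcMpos : 0 < P (c - M) := hPpos _ (Set.mem_Ioi.2 hcM)
          have := abs_nonneg phat
          apply add_le_add <;> apply mul_le_mul_of_nonneg_right habs <;> positivity
  -- combine
  have hmono : ∫ η, η * (phat - P c) ∂D ≤ ∫ η, F η ∂D := by
    apply integral_mono_ae hg_int hF_int
    filter_upwards [hsupp] with η hη
    exact hlow η hη
  have hval : ∫ η, η * (phat - P c) ∂D = μ * (phat - P c) := by
    rw [hμ, ← MeasureTheory.integral_mul_const]
  have heq : ∫ η, (η * phat + ∫ a in (c + η)..c, P a) ∂D = ∫ η, F η ∂D :=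
    integral_congr_ae haeeq
  rw [heq]
  have : μ * (phat - P c) ≤ ∫ η, F η ∂D := hval ▸ hmono
  nlinarith [this]
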